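/- Let n_1, …, n_d be positive integers, n = n_1⋯n_d, V ∈ ℝⁿ, and let x_1 ∈ ℝ^{n_1}, …, x_{d−1} ∈ ℝ^{n_{d−1}} be fixed nonzero vectors. Then the function x_d ↦ ‖V − (x_1 ⊗ ⋯ ⊗ x_{d−1}) ⊗ x_d‖ over x_d ∈ ℝ^{n_d} attains its unique global minimum at x_d = (1/∏_{s=1}^{d−1}‖x_s‖²) · ((x_1 ⊗ ⋯ ⊗ x_{d−1})ᵀ ⊗ I_{n_d}) V. -/

import Mathlib

/-- The `s`-th mixed-radix digit (0-indexed) of an index `k ∈ Fin (n₁⋯n_d)`. -/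
def digitFin {d : ℕ} (n : Fin d → ℕ) (s : Fin d) (k : Fin (∏ t, n t)) : Fin (n s) :=
  ⟨(k.val / ∏ t ∈ Finset.Ioi s, n t) % n s,
   Nat.mod_lt _ (Nat.pos_of_ne_zero fun h0 => by
     have hk : (0 : ℕ) < ∏ t, n t := Nat.lt_of_le_of_lt (Nat.zero_le _) k.isLt
     rw [Finset.prod_eq_zero (Finset.mem_univ s) h0] at hk
     exact Nat.lt_irrefl 0 hk)⟩

lemma Ioi_last_prod {d : ℕ} (n : Fin (d+1) → ℕ) :
    ∏ t ∈ Finset.Ioi (Fin.last d), n t = 1 := by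
  have : Finset.Ioi (Fin.last d) = ∅ := by
    ext t; simp [Fin.lt_iff_val_lt_val, Nat.lt_irrefl, Fin.le_last t, not_lt.2 (Fin.le_last t)]
  rw [this, Finset.prod_empty]

lemma digit_last_val {d : ℕ} (n : Fin (d+1) → ℕ) (k : Fin (∏ t, n t)) :
    (digitFin n (Fin.last d) k).val = k.val % n (Fin.last d) := by
  simp [digitFin, Ioi_last_prod]

lemma prod_Ioi_castSucc {d : ℕ} (n : Fin (d+1) → ℕ) (s : Fin d) :
    ∏ t ∈ Finset.Ioi s.castSucc, n t
      = n (Fin.last d) * ∏ t ∈ Finset.Ioi s, n t.castSucc := by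
  have h1 : ∀ (m : ℕ) (f : Fin m → ℕ) (a : Fin m), (∏ t ∈ Finset.Ioi a, f t)
      = ∏ t, if a < t then f t else 1 := by
    intro m f a
    rw [← Finset.prod_filter]
    congr 1
    ext t; simp [Finset.mem_Ioi]
  rw [h1, h1, Fin.prod_univ_castSucc]
  simp [Fin.castSucc_lt_castSucc_iff, Fin.castSucc_lt_last, mul_comm]

lemma digit_castSucc_val {d : ℕ} (n : Fin (d+1) → ℕ) (s : Fin d)
    (k : Fin (∏ t, n t)) (q : Fin (∏ t : Fin d, n t.castSucc))
    (hq : q.val = k.val / n (Fin.last d)) :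
    digitFin n s.castSucc k = digitFin (fun t => n t.castSucc) s q := by
  apply Fin.ext
  simp only [digitFin, hq, prod_Ioi_castSucc]
  rw [Nat.div_div_eq_div_mul, mul_comm]

lemma sum_prod_digitFin {d : ℕ} (n : Fin d → ℕ) (f : ∀ t, Fin (n t) → ℝ) :
    ∑ k : Fin (∏ t, n t), ∏ t, f t (digitFin n t k) = ∏ t, ∑ i, f t i := by
  induction d with
  | zero => simp
  | succ d ih =>
    set m := n (Fin.last d) with hm
    have h : (∏ t, n t) = (∏ t : Fin d, n t.castSucc) * m := by
      rw [Fin.prod_univ_castSucc]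
    let e : Fin (∏ t : Fin d, n t.castSucc) × Fin m ≃ Fin (∏ t, n t) :=
      finProdFinEquiv.trans (finCongr h.symm)
    rw [← Equiv.sum_comp e (fun k => ∏ t, f t (digitFin n t k))]
    have key : ∀ (q : Fin (∏ t : Fin d, n t.castSucc)) (r : Fin m),
        (∏ t, f t (digitFin n t (e (q, r))))
          = (∏ s : Fin d, (fun t => f t.castSucc) s
              (digitFin (fun t => n t.castSucc) s q)) * f (Fin.last d) r := by
      intro q r
      have hval : (e (q, r)).val = r.val + m * q.val := rfl
      have hlast : digitFin n (Fin.last d) (e (q, r)) = r := by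
        apply Fin.ext
        rw [digit_last_val, hval]
        show (r.val + m * q.val) % m = r.val
        rw [Nat.add_mul_mod_self_left, Nat.mod_eq_of_lt r.isLt]
      have hq : q.val = (e (q, r)).val / m := by
        rw [hval]
        show q.val = (r.val + m * q.val) / m
        rw [Nat.add_mul_div_left _ _ r.pos, Nat.div_eq_of_lt r.isLt, Nat.zero_add]
      rw [Fin.prod_univ_castSucc]
      congr 1
      · exact Finset.prod_congr rfl fun s _ => by
          rw [digit_castSucc_val n s (e (q, r)) q hq]
      · rw [hlast]
    calc ∑ p : Fin (∏ t : Fin d, n t.castSucc) × Fin m,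
            ∏ t, f t (digitFin n t (e p))
        = ∑ q : Fin (∏ t : Fin d, n t.castSucc), ∑ r : Fin m,
            (∏ s : Fin d, (fun t => f t.castSucc) s
              (digitFin (fun t => n t.castSucc) s q)) * f (Fin.last d) r := by
          rw [Fintype.sum_prod_type]
          exact Finset.sum_congr rfl fun q _ => Finset.sum_congr rfl fun r _ => key q r
      _ = (∑ q : Fin (∏ t : Fin d, n t.castSucc),
            ∏ s : Fin d, (fun t => f t.castSucc) s
              (digitFin (fun t => n t.castSucc) s q)) * ∑ r : Fin m, f (Fin.last d) r := by
          rw [Finset.sum_mul]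
          exact Finset.sum_congr rfl fun q _ => by rw [Finset.mul_sum]
      _ = ∏ t : Fin (d+1), ∑ i, f t i := by
          rw [ih, ← Fin.prod_univ_castSucc (f := fun t => ∑ i, f t i)]

/-- The iterated Kronecker product `x₁ ⊗ x₂ ⊗ ⋯ ⊗ x_d` of column vectors
`x_s ∈ ℝ^{n_s}`, as a vector in `ℝ^{n₁⋯n_d}` (big-endian mixed-radix indexing). -/
noncomputable def bigKron {d : ℕ} (n : Fin d → ℕ)
    (x : ∀ s, EuclideanSpace ℝ (Fin (n s))) :
    EuclideanSpace ℝ (Fin (∏ t, n t)) :=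
  WithLp.toLp 2 fun k => ∏ s, x s (digitFin n s k)

/-- The matrix `(x₁ ⊗ ⋯ ⊗ x_{d−1})ᵀ ⊗ I_{n_d}` (an `n_d × (n₁⋯n_d)` matrix)
applied to `V ∈ ℝ^{n₁⋯n_d}`: its `j`-th entry is
`∑_{k : last digit of k = j} (∏_s (x_s)_{digit_s k}) · V_k`. -/
noncomputable def lastProj {d : ℕ} (n : Fin (d + 1) → ℕ)
    (x : ∀ s : Fin d, EuclideanSpace ℝ (Fin (n s.castSucc)))
    (V : EuclideanSpace ℝ (Fin (∏ t, n t))) :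
    EuclideanSpace ℝ (Fin (n (Fin.last d))) :=
  WithLp.toLp 2 fun j => ∑ k : Fin (∏ t, n t),
    (if digitFin n (Fin.last d) k = j
      then ∏ s : Fin d, x s (digitFin n s.castSucc k) else 0) * V k

lemma normsq_eq {N : ℕ} (z : EuclideanSpace ℝ (Fin N)) :
    ‖z‖ ^ 2 = ∑ i, z i ^ 2 := by
  rw [EuclideanSpace.norm_eq, Real.sq_sqrt (by positivity)]
  exact Finset.sum_congr rfl fun i _ => by rw [Real.norm_eq_abs, sq_abs]

lemma bigKron_snoc {d : ℕ} (n : Fin (d + 1) → ℕ)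
    (x : ∀ s : Fin d, EuclideanSpace ℝ (Fin (n s.castSucc)))
    (y : EuclideanSpace ℝ (Fin (n (Fin.last d)))) (k : Fin (∏ t, n t)) :
    bigKron n (Fin.snoc x y) k
      = (∏ s : Fin d, x s (digitFin n s.castSucc k)) * y (digitFin n (Fin.last d) k) := by
  unfold bigKron
  rw [PiLp.toLp_apply]
  rw [Fin.prod_univ_castSucc (f := fun s : Fin (d + 1) =>
    Fin.snoc (α := fun t => EuclideanSpace ℝ (Fin (n t))) x y s (digitFin n s k))]
  simp

lemma cross_sum {d : ℕ} (n : Fin (d + 1) → ℕ)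
    (x : ∀ s : Fin d, EuclideanSpace ℝ (Fin (n s.castSucc)))
    (V : EuclideanSpace ℝ (Fin (∏ t, n t)))
    (y : EuclideanSpace ℝ (Fin (n (Fin.last d)))) :
    ∑ j, lastProj n x V j * y j
      = ∑ k : Fin (∏ t, n t),
          V k * ((∏ s : Fin d, x s (digitFin n s.castSucc k))
            * y (digitFin n (Fin.last d) k)) := by
  unfold lastProj
  simp only [Finset.sum_mul]
  rw [Finset.sum_comm]
  refine Finset.sum_congr rfl fun k _ => ?_
  have : ∀ j, (if digitFin n (Fin.last d) k = j
      then ∏ s : Fin d, x s (digitFin n s.castSucc k) else 0) * V k * y j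
      = if digitFin n (Fin.last d) k = j
        then V k * ((∏ s : Fin d, x s (digitFin n s.castSucc k)) * y j) else 0 := by
    intro j; split <;> ring
  simp only [this, Finset.sum_ite_eq, Finset.mem_univ, if_true]

lemma sq_sum {d : ℕ} (n : Fin (d + 1) → ℕ)
    (x : ∀ s : Fin d, EuclideanSpace ℝ (Fin (n s.castSucc)))
    (y : EuclideanSpace ℝ (Fin (n (Fin.last d)))) :
    ∑ k : Fin (∏ t, n t),
        ((∏ s : Fin d, x s (digitFin n s.castSucc k))
          * y (digitFin n (Fin.last d) k)) ^ 2
      = (∏ s, ‖x s‖ ^ 2) * ∑ j, y j ^ 2 := by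
  have key := sum_prod_digitFin n
    (Fin.snoc (α := fun t => Fin (n t) → ℝ) (fun s i => x s i ^ 2) (fun j => y j ^ 2))
  have h1 : ∀ k : Fin (∏ t, n t),
      (∏ t, Fin.snoc (α := fun t => Fin (n t) → ℝ) (fun s i => x s i ^ 2) (fun j => y j ^ 2) t (digitFin n t k))
        = ((∏ s : Fin d, x s (digitFin n s.castSucc k))
            * y (digitFin n (Fin.last d) k)) ^ 2 := by
    intro k
    rw [Fin.prod_univ_castSucc (f := fun t : Fin (d + 1) =>
      Fin.snoc (α := fun t => Fin (n t) → ℝ) (fun s i => x s i ^ 2)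
        (fun j => y j ^ 2) t (digitFin n t k))]
    simp [mul_pow, Finset.prod_pow]
  have h2 : (∏ t : Fin (d + 1), ∑ i,
      Fin.snoc (α := fun t => Fin (n t) → ℝ) (fun s i => x s i ^ 2) (fun j => y j ^ 2) t i)
      = (∏ s, ‖x s‖ ^ 2) * ∑ j, y j ^ 2 := by
    rw [Fin.prod_univ_castSucc (f := fun t : Fin (d + 1) =>
      ∑ i, Fin.snoc (α := fun t => Fin (n t) → ℝ) (fun s i => x s i ^ 2)
        (fun j => y j ^ 2) t i)]
    simp only [Fin.snoc_castSucc, Fin.snoc_last]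
    congr 1
    exact Finset.prod_congr rfl fun s _ => by rw [normsq_eq]
  rw [← h2, ← key]
  exact Finset.sum_congr rfl fun k _ => (h1 k).symm

lemma norm_sub_kron {d : ℕ} (n : Fin (d + 1) → ℕ)
    (x : ∀ s : Fin d, EuclideanSpace ℝ (Fin (n s.castSucc)))
    (V : EuclideanSpace ℝ (Fin (∏ t, n t)))
    (y : EuclideanSpace ℝ (Fin (n (Fin.last d)))) :
    ‖V - bigKron n (Fin.snoc x y)‖ ^ 2
      = (∑ k, V k ^ 2) - 2 * (∑ j, lastProj n x V j * y j)
        + (∏ s, ‖x s‖ ^ 2) * ∑ j, y j ^ 2 := by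
  rw [normsq_eq]
  have h1 : ∀ k : Fin (∏ t, n t),
      (V - bigKron n (Fin.snoc x y)) k ^ 2
        = V k ^ 2
          - 2 * (V k * ((∏ s : Fin d, x s (digitFin n s.castSucc k))
              * y (digitFin n (Fin.last d) k)))
          + ((∏ s : Fin d, x s (digitFin n s.castSucc k))
              * y (digitFin n (Fin.last d) k)) ^ 2 := by
    intro k
    rw [PiLp.sub_apply, bigKron_snoc]
    ring
  rw [Finset.sum_congr rfl fun k _ => h1 k]
  rw [Finset.sum_add_distrib, Finset.sum_sub_distrib, sq_sum, ← Finset.mul_sum,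
    ← cross_sum]

/-- For fixed nonzero `x₁,…,x_{d−1}`, the map
`x_d ↦ ‖V − (x₁ ⊗ ⋯ ⊗ x_{d−1}) ⊗ x_d‖` attains its unique global minimum at
`x_d = (1/∏ₛ‖x_s‖²) · ((x₁ ⊗ ⋯ ⊗ x_{d−1})ᵀ ⊗ I_{n_d}) V`. -/
theorem NKP_last_factor {d : ℕ} (n : Fin (d + 1) → ℕ) (hn : ∀ s, 0 < n s)
    (x : ∀ s : Fin d, EuclideanSpace ℝ (Fin (n s.castSucc)))
    (hx : ∀ s, x s ≠ 0)
    (V : EuclideanSpace ℝ (Fin (∏ t, n t))) :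
    ∀ y : EuclideanSpace ℝ (Fin (n (Fin.last d))),
      y ≠ (∏ s, ‖x s‖ ^ 2)⁻¹ • lastProj n x V →
      ‖V - bigKron n (Fin.snoc x ((∏ s, ‖x s‖ ^ 2)⁻¹ • lastProj n x V))‖
        < ‖V - bigKron n (Fin.snoc x y)‖ := by
  intro y hy
  set c : ℝ := ∏ s, ‖x s‖ ^ 2 with hc
  set y0 : EuclideanSpace ℝ (Fin (n (Fin.last d))) := c⁻¹ • lastProj n x V with hy0
  have hcpos : 0 < c := Finset.prod_pos fun s _ =>
    pow_pos (norm_pos_iff.mpr (hx s)) 2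
  have hPj : ∀ j, lastProj n x V j = c * y0 j := by
    intro j
    rw [hy0, PiLp.smul_apply, smul_eq_mul]
    field_simp
  have hexp : ∀ z : EuclideanSpace ℝ (Fin (n (Fin.last d))),
      ‖V - bigKron n (Fin.snoc x z)‖ ^ 2
        = (∑ k, V k ^ 2) - 2 * (c * (∑ j, y0 j * z j)) + c * ∑ j, z j ^ 2 := by
    intro z
    have hcross : ∑ j, lastProj n x V j * z j = c * ∑ j, y0 j * z j := by
      rw [Finset.mul_sum]
      exact Finset.sum_congr rfl fun j _ => by rw [hPj j]; ring
    rw [norm_sub_kron, hcross]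
  have hsq : ∑ j, (y j - y0 j) ^ 2
      = ((∑ j, y j ^ 2) - 2 * ∑ j, y0 j * y j) + ∑ j, y0 j ^ 2 := by
    have h : ∀ j ∈ Finset.univ, (y j - y0 j) ^ 2
        = (y j ^ 2 - 2 * (y0 j * y j)) + y0 j ^ 2 := fun j _ => by ring
    rw [Finset.sum_congr rfl h, Finset.sum_add_distrib, Finset.sum_sub_distrib,
      ← Finset.mul_sum]
  have h00 : ∑ j, y0 j * y0 j = ∑ j, y0 j ^ 2 :=
    Finset.sum_congr rfl fun j _ => by ring
  have hdiff : ‖V - bigKron n (Fin.snoc x y)‖ ^ 2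
      - ‖V - bigKron n (Fin.snoc x y0)‖ ^ 2
      = c * ∑ j, (y j - y0 j) ^ 2 := by
    rw [hexp y, hexp y0, hsq, h00]
    ring
  have hsumpos : 0 < ∑ j, (y j - y0 j) ^ 2 := by
    obtain ⟨j, hj⟩ : ∃ j, y j ≠ y0 j := by
      by_contra hall
      push_neg at hall
      exact hy (PiLp.ext hall)
    refine Finset.sum_pos' (fun j _ => sq_nonneg _) ⟨j, Finset.mem_univ j, ?_⟩
    have := sub_ne_zero.mpr hj
    positivity
  have hlt : ‖V - bigKron n (Fin.snoc x y0)‖ ^ 2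
      < ‖V - bigKron n (Fin.snoc x y)‖ ^ 2 := by
    have := mul_pos hcpos hsumpos
    linarith [hdiff]
  exact lt_of_pow_lt_pow_left₀ 2 (norm_nonneg _) hlt
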